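/- Let φ : 𝔻ⁿ → 𝔻ⁿ be holomorphic with φ(0) = 0 and Bergman constant B_φ ≤ 1, and suppose there exists a sequence {S_j} of biholomorphic bijections of 𝔻ⁿ onto itself such that φ∘S_j converges to the identity map uniformly on compact subsets of 𝔻ⁿ. Then C_φ is an isometry on the Bloch space of 𝔻ⁿ: for every Bloch function f on 𝔻ⁿ, f∘φ is Bloch and ‖f∘φ‖_B = ‖f‖_B. -/

import Mathlib

open Complex Metric Set

/-- The unit polydisk `𝔻ⁿ = { z ∈ ℂⁿ : |z_k| < 1 for all k }`. -/
def polydisk (n : ℕ) : Set (Fin n → ℂ) := {z | ∀ k, ‖z k‖ < 1}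

/-- The Bergman metric on the polydisk: `H_z(u,ū) = Σ_k |u_k|²/(1−|z_k|²)²`. -/
noncomputable def polyH (n : ℕ) (z u : Fin n → ℂ) : ℝ :=
  ∑ k, ‖u k‖ ^ 2 / (1 - ‖z k‖ ^ 2) ^ 2

/-- `Q_f(z) = sup_{u ≠ 0} |f'(z)u| / H_z(u,ū)^{1/2}` on the polydisk. -/
noncomputable def Qpoly (n : ℕ) (f : (Fin n → ℂ) → ℂ) (z : Fin n → ℂ) : ℝ :=
  sSup {r : ℝ | ∃ u : Fin n → ℂ, u ≠ 0 ∧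
    r = ‖fderiv ℂ f z u‖ / Real.sqrt (polyH n z u)}

/-- The set of values `Q_f(z)` for `z ∈ 𝔻ⁿ`. -/
def blochValuesPoly (n : ℕ) (f : (Fin n → ℂ) → ℂ) : Set ℝ :=
  {r : ℝ | ∃ z ∈ polydisk n, r = Qpoly n f z}

/-- The Bloch seminorm `β_f = sup_{z ∈ 𝔻ⁿ} Q_f(z)`. -/
noncomputable def blochSemiPoly (n : ℕ) (f : (Fin n → ℂ) → ℂ) : ℝ :=
  sSup (blochValuesPoly n f)

/-- `f` is a Bloch function on the polydisk. -/
def IsBlochPoly (n : ℕ) (f : (Fin n → ℂ) → ℂ) : Prop :=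
  DifferentiableOn ℂ f (polydisk n) ∧ BddAbove (blochValuesPoly n f)

/-- The Bloch norm `‖f‖_B = |f(0)| + β_f` on the polydisk. -/
noncomputable def blochNormPoly (n : ℕ) (f : (Fin n → ℂ) → ℂ) : ℝ :=
  ‖f 0‖ + blochSemiPoly n f

/-- The Bergman constant of a holomorphic self-map `φ` of the polydisk:
`B_φ = sup_{z ∈ 𝔻ⁿ} sup_{u ≠ 0} (H_{φ(z)}(φ'(z)u) / H_z(u))^{1/2}`. -/
noncomputable def bergmanConstPoly (n : ℕ) (φ : (Fin n → ℂ) → Fin n → ℂ) : ℝ :=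
  sSup {r : ℝ | ∃ z ∈ polydisk n, ∃ u : Fin n → ℂ, u ≠ 0 ∧
    r = Real.sqrt (polyH n (φ z) (fderiv ℂ φ z u) / polyH n z u)}

/-- `S` is a biholomorphic bijection (automorphism) of the polydisk. -/
def IsPolydiskAut (n : ℕ) (S : (Fin n → ℂ) → Fin n → ℂ) : Prop :=
  DifferentiableOn ℂ S (polydisk n) ∧ BijOn S (polydisk n) (polydisk n) ∧
  ∃ T : (Fin n → ℂ) → Fin n → ℂ, DifferentiableOn ℂ T (polydisk n) ∧
    InvOn T S (polydisk n) (polydisk n)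


namespace BlochAux

variable {n : ℕ}





lemma isOpen_polydisk (n : ℕ) : IsOpen (polydisk n) := by
  have h : polydisk n = ⋂ k, {z : Fin n → ℂ | ‖z k‖ < 1} := by
    ext z; simp [polydisk, Set.mem_iInter]
  rw [h]
  exact isOpen_iInter_of_finite fun k =>
    isOpen_lt ((continuous_apply k).norm) continuous_const

lemma zero_mem_polydisk : (0 : Fin n → ℂ) ∈ polydisk n := fun k => by simp

lemma one_sub_sq_pos {z : Fin n → ℂ} (hz : z ∈ polydisk n) (k : Fin n) :
    0 < 1 - ‖z k‖ ^ 2 := by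
  have := hz k
  nlinarith [norm_nonneg (z k)]

lemma polyH_nonneg (z u : Fin n → ℂ) : 0 ≤ polyH n z u := by
  apply Finset.sum_nonneg; intro k _; positivity

lemma polyH_pos {z u : Fin n → ℂ} (hz : z ∈ polydisk n) (hu : u ≠ 0) :
    0 < polyH n z u := by
  obtain ⟨k, hk⟩ := Function.ne_iff.1 hu
  refine Finset.sum_pos' (fun k _ => by positivity) ⟨k, Finset.mem_univ k, ?_⟩
  have h1 := one_sub_sq_pos hz k
  have h2 : 0 < ‖u k‖ := by simpa using hk
  positivity

lemma sq_le_polyH {z : Fin n → ℂ} (hz : z ∈ polydisk n) (u : Fin n → ℂ) (k : Fin n) :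
    ‖u k‖ ^ 2 ≤ polyH n z u := by
  have h1 := one_sub_sq_pos hz k
  have h2 : 1 - ‖z k‖ ^ 2 ≤ 1 := by nlinarith [norm_nonneg (z k)]
  have : ‖u k‖ ^ 2 ≤ ‖u k‖ ^ 2 / (1 - ‖z k‖ ^ 2) ^ 2 := by
    rw [le_div_iff₀ (by positivity)]
    have h3 : (1 - ‖z k‖ ^ 2) ^ 2 ≤ 1 := by nlinarith
    nlinarith [sq_nonneg (‖u k‖), mul_le_mul_of_nonneg_left h3 (sq_nonneg (‖u k‖))]
  refine this.trans ?_
  exact Finset.single_le_sum (f := fun k => ‖u k‖ ^ 2 / (1 - ‖z k‖ ^ 2) ^ 2)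
    (fun k _ => by positivity) (Finset.mem_univ k)

lemma norm_le_sqrt_polyH {z : Fin n → ℂ} (hz : z ∈ polydisk n) (u : Fin n → ℂ) :
    ‖u‖ ≤ Real.sqrt (polyH n z u) := by
  rw [pi_norm_le_iff_of_nonneg (Real.sqrt_nonneg _)]
  intro k
  rw [show ‖u k‖ = Real.sqrt (‖u k‖ ^ 2) by simp [Real.sqrt_sq (norm_nonneg _)]]
  exact Real.sqrt_le_sqrt (sq_le_polyH hz u k)

lemma sqrt_polyH_pos {z u : Fin n → ℂ} (hz : z ∈ polydisk n) (hu : u ≠ 0) :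
    0 < Real.sqrt (polyH n z u) := Real.sqrt_pos.2 (polyH_pos hz hu)



variable {n : ℕ}
-- (imagine section-1 lemmas are here; I test assuming them via sorried axioms)
def QSet (n : ℕ) (f : (Fin n → ℂ) → ℂ) (z : Fin n → ℂ) : Set ℝ :=
  {r : ℝ | ∃ u : Fin n → ℂ, u ≠ 0 ∧ r = ‖fderiv ℂ f z u‖ / Real.sqrt (polyH n z u)}

lemma Qpoly_eq (n f z) : Qpoly n f z = sSup (QSet n f z) := rfl

lemma QSet_nonneg {f z} {r : ℝ} (hr : r ∈ QSet n f z) : 0 ≤ r := by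
  obtain ⟨u, _, rfl⟩ := hr
  positivity

lemma QSet_le {f} {z : Fin n → ℂ} (hz : z ∈ polydisk n) {r : ℝ} (hr : r ∈ QSet n f z) :
    r ≤ ‖fderiv ℂ f z‖ := by
  obtain ⟨u, hu, rfl⟩ := hr
  rw [div_le_iff₀ (sqrt_polyH_pos hz hu)]
  calc ‖fderiv ℂ f z u‖ ≤ ‖fderiv ℂ f z‖ * ‖u‖ := (fderiv ℂ f z).le_opNorm u
  _ ≤ ‖fderiv ℂ f z‖ * Real.sqrt (polyH n z u) :=
      mul_le_mul_of_nonneg_left (norm_le_sqrt_polyH hz u) (norm_nonneg _)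

lemma bddAbove_QSet {f} {z : Fin n → ℂ} (hz : z ∈ polydisk n) : BddAbove (QSet n f z) :=
  ⟨_, fun _ hr => QSet_le hz hr⟩

lemma Qpoly_nonneg (f : (Fin n → ℂ) → ℂ) (z : Fin n → ℂ) : 0 ≤ Qpoly n f z :=
  Real.sSup_nonneg (fun _ hr => QSet_nonneg hr)

lemma le_Qpoly {f} {z u : Fin n → ℂ} (hz : z ∈ polydisk n) (hu : u ≠ 0) :
    ‖fderiv ℂ f z u‖ / Real.sqrt (polyH n z u) ≤ Qpoly n f z :=
  le_csSup (bddAbove_QSet hz) ⟨u, hu, rfl⟩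

lemma Qpoly_le {f} {z : Fin n → ℂ} {c : ℝ} (hc : 0 ≤ c)
    (h : ∀ u : Fin n → ℂ, u ≠ 0 → ‖fderiv ℂ f z u‖ / Real.sqrt (polyH n z u) ≤ c) :
    Qpoly n f z ≤ c := by
  refine Real.sSup_le ?_ hc
  rintro r ⟨u, hu, rfl⟩
  exact h u hu

lemma norm_fderiv_le_Qpoly {f} {z : Fin n → ℂ} (hz : z ∈ polydisk n) (u : Fin n → ℂ) :
    ‖fderiv ℂ f z u‖ ≤ Qpoly n f z * Real.sqrt (polyH n z u) := by
  rcases eq_or_ne u 0 with rfl | hu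
  · simp [Qpoly_nonneg, mul_nonneg (Qpoly_nonneg f z) (Real.sqrt_nonneg _)]
  · rw [← div_le_iff₀ (sqrt_polyH_pos hz hu)]
    exact le_Qpoly hz hu

lemma blochSemi_nonneg (f : (Fin n → ℂ) → ℂ) : 0 ≤ blochSemiPoly n f := by
  refine Real.sSup_nonneg ?_
  rintro r ⟨z, hz, rfl⟩
  exact Qpoly_nonneg f z

lemma Qpoly_le_blochSemi {f} {z : Fin n → ℂ} (hb : BddAbove (blochValuesPoly n f))
    (hz : z ∈ polydisk n) : Qpoly n f z ≤ blochSemiPoly n f :=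
  le_csSup hb ⟨z, hz, rfl⟩

lemma blochSemi_le {f} {c : ℝ} (hc : 0 ≤ c)
    (h : ∀ z ∈ polydisk n, Qpoly n f z ≤ c) : blochSemiPoly n f ≤ c := by
  refine Real.sSup_le ?_ hc
  rintro r ⟨z, hz, rfl⟩
  exact h z hz




noncomputable def mob (a z : ℂ) : ℂ := (a - z) / (1 - (starRingEnd ℂ) a * z)

lemma normSq_identity (a z : ℂ) :
    normSq (1 - (starRingEnd ℂ) a * z) = normSq (a - z) + (1 - normSq a) * (1 - normSq z) := by
  simp only [normSq_apply, Complex.sub_re, Complex.sub_im, Complex.mul_re, Complex.mul_im,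
    Complex.one_re, Complex.one_im, Complex.conj_re, Complex.conj_im]
  ring

lemma mob_denom_ne_zero {a z : ℂ} (ha : ‖a‖ < 1) (hz : ‖z‖ < 1) :
    1 - (starRingEnd ℂ) a * z ≠ 0 := by
  intro h
  have h1 : ‖(starRingEnd ℂ) a * z‖ < 1 := by
    rw [norm_mul, RCLike.norm_conj]
    nlinarith [norm_nonneg a, norm_nonneg z]
  have h2 : (starRingEnd ℂ) a * z = 1 := by linear_combination -h
  rw [h2] at h1; simp at h1

lemma normSq_eq_norm_sq (z : ℂ) : normSq z = ‖z‖ ^ 2 := by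
  exact Complex.normSq_eq_norm_sq z

lemma mob_maps {a z : ℂ} (ha : ‖a‖ < 1) (hz : ‖z‖ < 1) : ‖mob a z‖ < 1 := by
  have hd := mob_denom_ne_zero ha hz
  have hpos : 0 < normSq (1 - (starRingEnd ℂ) a * z) := normSq_pos.2 hd
  have hlt : normSq (a - z) < normSq (1 - (starRingEnd ℂ) a * z) := by
    rw [normSq_identity]
    have h1 : 0 < 1 - normSq a := by rw [normSq_eq_norm_sq]; nlinarith [norm_nonneg a]
    have h2 : 0 < 1 - normSq z := by rw [normSq_eq_norm_sq]; nlinarith [norm_nonneg z]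
    nlinarith
  rw [mob, norm_div, div_lt_one (norm_pos_iff.2 hd)]
  have := Real.sqrt_lt_sqrt (normSq_nonneg _) hlt
  simpa [Complex.norm_def] using this

lemma mob_self (a : ℂ) : mob a a = 0 := by simp [mob]

lemma mob_zero (a : ℂ) : mob a 0 = a := by simp [mob]

lemma mob_one_sub_sq {a z : ℂ} (ha : ‖a‖ < 1) (hz : ‖z‖ < 1) :
    1 - ‖mob a z‖ ^ 2 =
      (1 - ‖a‖ ^ 2) * (1 - ‖z‖ ^ 2) / ‖1 - (starRingEnd ℂ) a * z‖ ^ 2 := by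
  have hd := mob_denom_ne_zero ha hz
  have hpos : 0 < ‖1 - (starRingEnd ℂ) a * z‖ ^ 2 := pow_pos (norm_pos_iff.2 hd) 2
  have hm : ‖mob a z‖ ^ 2 = ‖a - z‖ ^ 2 / ‖1 - (starRingEnd ℂ) a * z‖ ^ 2 := by
    rw [mob, norm_div, div_pow]
  have hid := normSq_identity a z
  simp only [normSq_eq_norm_sq] at hid
  rw [hm]
  rw [show (1:ℝ) - ‖a - z‖ ^ 2 / ‖1 - (starRingEnd ℂ) a * z‖ ^ 2
      = (‖1 - (starRingEnd ℂ) a * z‖ ^ 2 - ‖a - z‖ ^ 2) / ‖1 - (starRingEnd ℂ) a * z‖ ^ 2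
      from by rw [sub_div, div_self (ne_of_gt hpos)]]
  congr 1
  linarith

lemma hasDerivAt_mob {a z : ℂ} (hd : 1 - (starRingEnd ℂ) a * z ≠ 0) :
    HasDerivAt (mob a) (((starRingEnd ℂ) a * a - 1) / (1 - (starRingEnd ℂ) a * z) ^ 2) z := by
  have h1 : HasDerivAt (fun w : ℂ => a - w) (-1) z := by
    simpa using (hasDerivAt_id z).const_sub a
  have h2 : HasDerivAt (fun w : ℂ => 1 - (starRingEnd ℂ) a * w) (-(starRingEnd ℂ) a) z := by
    simpa using ((hasDerivAt_id z).const_mul ((starRingEnd ℂ) a)).const_sub 1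
  have := h1.div h2 hd
  refine this.congr_deriv ?_
  rw [div_eq_div_iff (pow_ne_zero 2 hd) (pow_ne_zero 2 hd)]
  ring

lemma norm_mob_deriv {a z : ℂ} (ha : ‖a‖ < 1) (hz : ‖z‖ < 1) :
    ‖((starRingEnd ℂ) a * a - 1) / (1 - (starRingEnd ℂ) a * z) ^ 2‖ * (1 - ‖z‖ ^ 2)
      = 1 - ‖mob a z‖ ^ 2 := by
  have h1 : (starRingEnd ℂ) a * a - 1 = (((normSq a - 1 : ℝ)) : ℂ) := by
    rw [mul_comm, Complex.mul_conj]; push_cast; ring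
  have hnum : ‖(starRingEnd ℂ) a * a - 1‖ = 1 - ‖a‖ ^ 2 := by
    rw [h1, Complex.norm_real, Real.norm_eq_abs, abs_of_nonpos (by rw [normSq_eq_norm_sq]; nlinarith [norm_nonneg a])]
    rw [normSq_eq_norm_sq]; ring
  rw [norm_div, hnum, norm_pow, mob_one_sub_sq ha hz]
  ring



lemma mob_invol {a z : ℂ} (ha : ‖a‖ < 1) (hz : ‖z‖ < 1) : mob a (mob a z) = z := by
  have hd := mob_denom_ne_zero ha hz
  have hd2 := mob_denom_ne_zero ha (mob_maps ha hz)
  unfold mob at hd2 ⊢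
  rw [div_eq_iff hd2]
  have hd' : 1 - z * (starRingEnd ℂ) a ≠ 0 := by rwa [mul_comm] at hd
  field_simp
  ring




/-- Schwarz–Pick at the origin: `‖h'(0)‖ ≤ 1 - ‖h 0‖²`. -/
lemma schwarz_pick_zero {h : ℂ → ℂ} (hd : DifferentiableOn ℂ h (ball 0 1))
    (hm : MapsTo h (ball 0 1) (ball 0 1)) {d : ℂ} (hder : HasDerivAt h d 0) :
    ‖d‖ ≤ 1 - ‖h 0‖ ^ 2 := by
  set a := h 0 with ha_def
  have ha : ‖a‖ < 1 := by
    have := hm (mem_ball_self one_pos)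
    simpa [mem_ball, dist_eq_norm] using this
  have hane : 1 - (starRingEnd ℂ) a * a ≠ 0 := mob_denom_ne_zero ha ha
  set V : ℂ := ((starRingEnd ℂ) a * a - 1) / (1 - (starRingEnd ℂ) a * a) ^ 2 with hV
  have hp : HasDerivAt (fun w => mob a (h w)) (V * d) 0 := by
    have := (hasDerivAt_mob hane).comp 0 hder
    exact this
  have hball : ∀ w ∈ ball (0:ℂ) 1, ‖h w‖ < 1 := by
    intro w hw
    have := hm hw
    simpa [mem_ball, dist_eq_norm] using this
  have hdp : DifferentiableOn ℂ (fun w => mob a (h w)) (ball 0 1) := by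
    intro w hw
    have hhw : DifferentiableAt ℂ h w :=
      (hd w hw).differentiableAt (isOpen_ball.mem_nhds hw)
    have : DifferentiableAt ℂ (mob a) (h w) :=
      (hasDerivAt_mob (mob_denom_ne_zero ha (hball w hw))).differentiableAt
    exact (this.comp w hhw).differentiableWithinAt
  have hmp : MapsTo (fun w => mob a (h w)) (ball 0 1) (ball ((fun w => mob a (h w)) 0) 1) := by
    intro w hw
    have h0 : mob a (h 0) = 0 := by rw [← ha_def, mob_self]
    simp only [h0, mem_ball, dist_eq_norm, sub_zero]
    exact mob_maps ha (hball w hw)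
  have key : ‖deriv (fun w => mob a (h w)) 0‖ ≤ 1 / 1 :=
    norm_deriv_le_div_of_mapsTo_ball hdp (hmp.mono_right ball_subset_closedBall) one_pos
  rw [hp.deriv] at key
  have hnd : ‖V‖ * (1 - ‖a‖ ^ 2) = 1 - ‖mob a a‖ ^ 2 := norm_mob_deriv ha ha
  rw [mob_self] at hnd
  simp only [norm_zero] at hnd
  have hpos : 0 < 1 - ‖a‖ ^ 2 := by nlinarith [norm_nonneg a]
  have hVnorm : ‖V‖ = 1 / (1 - ‖a‖ ^ 2) := by
    rw [eq_div_iff (ne_of_gt hpos)]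
    simpa using hnd
  rw [norm_mul, hVnorm] at key
  rw [div_mul_eq_mul_div, one_mul, div_le_div_iff₀ hpos one_pos] at key
  linarith






/-- coordinate of fderiv -/
lemma fderiv_coord_apply {φ : (Fin n → ℂ) → Fin n → ℂ} {z : Fin n → ℂ}
    (hφ : DifferentiableAt ℂ φ z) (k : Fin n) (u : Fin n → ℂ) :
    fderiv ℂ (fun w => φ w k) z u = fderiv ℂ φ z u k := by
  have h := hasFDerivAt_pi'.1 hφ.hasFDerivAt k
  rw [h.fderiv]
  rfl

/-- directional Schwarz–Pick on the polydisk -/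
lemma dir_schwarz_pick {g : (Fin n → ℂ) → ℂ} (hg : DifferentiableOn ℂ g (polydisk n))
    (hb : ∀ w ∈ polydisk n, ‖g w‖ < 1) {z : Fin n → ℂ} (hz : z ∈ polydisk n)
    (u : Fin n → ℂ) :
    ‖fderiv ℂ g z u‖ ≤ (1 - ‖g z‖ ^ 2) * Real.sqrt (polyH n z u) := by
  rcases eq_or_ne u 0 with rfl | hu
  · have h1 : 0 < 1 - ‖g z‖ ^ 2 := by nlinarith [hb z hz, norm_nonneg (g z)]
    simp [Real.sqrt_nonneg]
    positivity
  set m : ℝ := Real.sqrt (polyH n z u) with hm_def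
  have hm : 0 < m := Real.sqrt_pos.2 (polyH_pos hz hu)
  set a : Fin n → ℂ := fun k => u k / ((m * (1 - ‖z k‖ ^ 2) : ℝ) : ℂ) with ha_def
  have hak : ∀ k, ‖a k‖ ≤ 1 := by
    intro k
    have h1 := one_sub_sq_pos hz k
    have h2 : ‖u k‖ ^ 2 / (1 - ‖z k‖ ^ 2) ^ 2 ≤ polyH n z u :=
      Finset.single_le_sum (f := fun k => ‖u k‖ ^ 2 / (1 - ‖z k‖ ^ 2) ^ 2)
        (fun k _ => by positivity) (Finset.mem_univ k)
    have h3 : ‖u k‖ ≤ m * (1 - ‖z k‖ ^ 2) := by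
      have h4 : (‖u k‖ / (1 - ‖z k‖ ^ 2)) ^ 2 ≤ m ^ 2 := by
        rw [div_pow]
        rw [hm_def, Real.sq_sqrt (polyH_nonneg z u)]
        exact h2
      have h5 : ‖u k‖ / (1 - ‖z k‖ ^ 2) ≤ m := by
        nlinarith [div_nonneg (norm_nonneg (u k)) h1.le]
      exact (div_le_iff₀ h1).1 h5
    rw [ha_def]
    simp only [norm_div, Complex.norm_real]
    rw [div_le_one (by rw [Real.norm_eq_abs, abs_of_pos (by positivity)]; positivity)]
    rw [Real.norm_eq_abs, abs_of_pos (by positivity)]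
    exact h3
  set γ : ℂ → Fin n → ℂ := fun lam k => mob (z k) (-(lam * a k)) with hγ_def
  have hγmaps : ∀ lam : ℂ, ‖lam‖ < 1 → γ lam ∈ polydisk n := by
    intro lam hlam k
    apply mob_maps (hz k)
    rw [norm_neg, norm_mul]
    calc ‖lam‖ * ‖a k‖ ≤ ‖lam‖ * 1 := by
          exact mul_le_mul_of_nonneg_left (hak k) (norm_nonneg lam)
    _ < 1 := by simpa using hlam
  have hγder : ∀ lam : ℂ, ‖lam‖ < 1 → HasDerivAt γ
      (fun k => ((starRingEnd ℂ) (z k) * z k - 1) /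
        (1 - (starRingEnd ℂ) (z k) * (-(lam * a k))) ^ 2 * (-(a k))) lam := by
    intro lam hlam
    rw [hasDerivAt_pi]
    intro k
    have hin : ‖-(lam * a k)‖ < 1 := by
      rw [norm_neg, norm_mul]
      calc ‖lam‖ * ‖a k‖ ≤ ‖lam‖ * 1 := mul_le_mul_of_nonneg_left (hak k) (norm_nonneg lam)
      _ < 1 := by simpa using hlam
    have hlin : HasDerivAt (fun lam : ℂ => -(lam * a k)) (-(a k)) lam := by
      exact (((hasDerivAt_id lam).mul_const (a k)).neg).congr_deriv (by simp)
    exact (hasDerivAt_mob (mob_denom_ne_zero (hz k) hin)).comp lam hlin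
  have hγ0 : γ 0 = z := by
    funext k; simp [hγ_def, mob_zero]
  have hvk : (fun k => ((starRingEnd ℂ) (z k) * z k - 1) /
      (1 - (starRingEnd ℂ) (z k) * (-((0:ℂ) * a k))) ^ 2 * (-(a k)))
      = (m⁻¹ : ℂ) • u := by
    funext k
    have h1 := one_sub_sq_pos hz k
    have hcz : (starRingEnd ℂ) (z k) * z k = ((‖z k‖ ^ 2 : ℝ) : ℂ) := by
      rw [mul_comm, Complex.mul_conj]
      norm_cast
      exact Complex.normSq_eq_norm_sq _
    simp only [zero_mul, neg_zero, mul_zero, sub_zero, one_pow, div_one]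
    rw [hcz, ha_def]
    simp only [Pi.smul_apply, smul_eq_mul]
    have hne : ((m * (1 - ‖z k‖ ^ 2) : ℝ) : ℂ) ≠ 0 := by
      norm_cast
      positivity
    have hm' : (m : ℂ) ≠ 0 := by exact_mod_cast hm.ne'
    have hs' : ((1 - ‖z k‖ ^ 2 : ℝ) : ℂ) ≠ 0 := by exact_mod_cast h1.ne'
    have hme : ((m * (1 - ‖z k‖ ^ 2) : ℝ) : ℂ) = (m : ℂ) * ((1 - ‖z k‖ ^ 2 : ℝ) : ℂ) := by
      push_cast; ring
    have h2 : ((‖z k‖ ^ 2 : ℝ) : ℂ) - 1 = -(((1 - ‖z k‖ ^ 2 : ℝ) : ℂ)) := by push_cast; ring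
    rw [hme, h2, div_eq_mul_inv, mul_inv]
    rw [show -(((1 - ‖z k‖ ^ 2 : ℝ)) : ℂ) * -(u k * (((m : ℝ) : ℂ)⁻¹ * (((1 - ‖z k‖ ^ 2 : ℝ) : ℂ))⁻¹))
        = ((((1 - ‖z k‖ ^ 2 : ℝ) : ℂ)) * ((((1 - ‖z k‖ ^ 2 : ℝ) : ℂ))⁻¹)) * (((m : ℝ) : ℂ)⁻¹ * u k) from by ring]
    rw [mul_inv_cancel₀ hs', one_mul]
  have hζder : HasDerivAt (fun lam => g (γ lam)) (fderiv ℂ g z ((m⁻¹ : ℂ) • u)) 0 := by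
    have hgd : DifferentiableAt ℂ g z :=
      (hg z hz).differentiableAt ((isOpen_polydisk n).mem_nhds hz)
    have hγd : HasDerivAt γ ((m⁻¹ : ℂ) • u) 0 := by
      have := hγder 0 (by simp)
      rw [hvk] at this
      exact this
    have hf : HasFDerivAt g (fderiv ℂ g z) (γ 0) := by
      rw [hγ0]; exact hgd.hasFDerivAt
    exact hf.comp_hasDerivAt 0 hγd
  have hζdiff : DifferentiableOn ℂ (fun lam => g (γ lam)) (ball 0 1) := by
    intro lam hlam
    have hlam' : ‖lam‖ < 1 := by simpa [mem_ball, dist_eq_norm] using hlam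
    have hγd : DifferentiableAt ℂ γ lam := (hγder lam hlam').differentiableAt
    have hgd : DifferentiableAt ℂ g (γ lam) :=
      (hg _ (hγmaps lam hlam')).differentiableAt
        ((isOpen_polydisk n).mem_nhds (hγmaps lam hlam'))
    exact (hgd.comp lam hγd).differentiableWithinAt
  have hζmaps : MapsTo (fun lam => g (γ lam)) (ball 0 1) (ball 0 1) := by
    intro lam hlam
    have hlam' : ‖lam‖ < 1 := by simpa [mem_ball, dist_eq_norm] using hlam
    simpa [mem_ball, dist_eq_norm] using hb _ (hγmaps lam hlam')
  have key := schwarz_pick_zero hζdiff hζmaps hζder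
  rw [hγ0] at key
  have hsm : ‖fderiv ℂ g z ((m⁻¹ : ℂ) • u)‖ = m⁻¹ * ‖fderiv ℂ g z u‖ := by
    rw [map_smul, norm_smul]
    congr 1
    rw [norm_inv, Complex.norm_real, Real.norm_eq_abs, abs_of_pos hm]
  rw [hsm] at key
  calc ‖fderiv ℂ g z u‖ = m * (m⁻¹ * ‖fderiv ℂ g z u‖) := by field_simp
  _ ≤ m * (1 - ‖g z‖ ^ 2) := mul_le_mul_of_nonneg_left key hm.le
  _ = (1 - ‖g z‖ ^ 2) * m := mul_comm _ _

/-- ℓ∞ Schwarz at the origin for maps fixing 0 -/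
lemma linf_schwarz {g : (Fin n → ℂ) → ℂ} (hg : DifferentiableOn ℂ g (polydisk n))
    (hb : ∀ w ∈ polydisk n, ‖g w‖ < 1) (h0 : g 0 = 0) (v : Fin n → ℂ) :
    ‖fderiv ℂ g 0 v‖ ≤ ‖v‖ := by
  rcases eq_or_ne v 0 with rfl | hv
  · simp
  have hvpos : 0 < ‖v‖ := norm_pos_iff.2 hv
  set w : Fin n → ℂ := ((‖v‖⁻¹ : ℝ) : ℂ) • v with hw_def
  have hwk : ∀ k, ‖w k‖ ≤ 1 := by
    intro k
    rw [hw_def]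
    simp only [Pi.smul_apply, smul_eq_mul, norm_mul, Complex.norm_real, Real.norm_eq_abs,
      abs_of_pos (inv_pos.2 hvpos)]
    rw [inv_mul_le_iff₀ hvpos, mul_one]
    exact norm_le_pi_norm v k
  set γ : ℂ → Fin n → ℂ := fun lam => lam • w with hγ_def
  have hγmaps : ∀ lam : ℂ, ‖lam‖ < 1 → γ lam ∈ polydisk n := by
    intro lam hlam k
    simp only [hγ_def, Pi.smul_apply, smul_eq_mul, norm_mul]
    calc ‖lam‖ * ‖w k‖ ≤ ‖lam‖ * 1 := mul_le_mul_of_nonneg_left (hwk k) (norm_nonneg lam)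
    _ < 1 := by simpa using hlam
  have hγder : ∀ lam : ℂ, HasDerivAt γ w lam := by
    intro lam
    rw [hasDerivAt_pi]
    intro k
    exact ((hasDerivAt_id lam).mul_const (w k)).congr_deriv (one_mul _)
  have hγ0 : γ 0 = 0 := by simp [hγ_def]
  have h0mem : (0 : Fin n → ℂ) ∈ polydisk n := by intro k; simp
  have hζder : HasDerivAt (fun lam => g (γ lam)) (fderiv ℂ g 0 w) 0 := by
    have hgd : DifferentiableAt ℂ g 0 :=
      (hg 0 h0mem).differentiableAt ((isOpen_polydisk n).mem_nhds h0mem)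
    have hf : HasFDerivAt g (fderiv ℂ g 0) (γ 0) := by
      rw [hγ0]; exact hgd.hasFDerivAt
    exact hf.comp_hasDerivAt 0 (hγder 0)
  have hζdiff : DifferentiableOn ℂ (fun lam => g (γ lam)) (ball 0 1) := by
    intro lam hlam
    have hlam' : ‖lam‖ < 1 := by simpa [mem_ball, dist_eq_norm] using hlam
    have hgd : DifferentiableAt ℂ g (γ lam) :=
      (hg _ (hγmaps lam hlam')).differentiableAt
        ((isOpen_polydisk n).mem_nhds (hγmaps lam hlam'))
    exact (hgd.comp lam (hγder lam).differentiableAt).differentiableWithinAt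
  have hζmaps : MapsTo (fun lam => g (γ lam)) (ball 0 1) (ball 0 1) := by
    intro lam hlam
    have hlam' : ‖lam‖ < 1 := by simpa [mem_ball, dist_eq_norm] using hlam
    simpa [mem_ball, dist_eq_norm] using hb _ (hγmaps lam hlam')
  have key := schwarz_pick_zero hζdiff hζmaps hζder
  rw [hγ0, h0] at key
  simp only [norm_zero] at key
  have hw : fderiv ℂ g 0 w = ((‖v‖⁻¹ : ℝ) : ℂ) • fderiv ℂ g 0 v := by
    rw [hw_def, map_smul]
  rw [hw] at key
  rw [norm_smul, Complex.norm_real, Real.norm_eq_abs, abs_of_pos (inv_pos.2 hvpos)] at key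
  have : ‖v‖⁻¹ * ‖fderiv ℂ g 0 v‖ ≤ 1 := by linarith
  calc ‖fderiv ℂ g 0 v‖ = ‖v‖ * (‖v‖⁻¹ * ‖fderiv ℂ g 0 v‖) := by field_simp
  _ ≤ ‖v‖ * 1 := mul_le_mul_of_nonneg_left this hvpos.le
  _ = ‖v‖ := mul_one _





section easy
variable {φ : (Fin n → ℂ) → Fin n → ℂ}
  (hmap : MapsTo φ (polydisk n) (polydisk n))
  (hφ : DifferentiableOn ℂ φ (polydisk n))

include hφ in
lemma coord_diff (k : Fin n) : DifferentiableOn ℂ (fun w => φ w k) (polydisk n) :=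
  differentiableOn_pi.1 hφ k

include hmap hφ in
lemma polyH_fderiv_le (z : Fin n → ℂ) (hz : z ∈ polydisk n) (u : Fin n → ℂ) :
    polyH n (φ z) (fderiv ℂ φ z u) ≤ (n : ℝ) * polyH n z u := by
  have hφz : DifferentiableAt ℂ φ z :=
    (hφ z hz).differentiableAt ((isOpen_polydisk n).mem_nhds hz)
  have hkey : ∀ k : Fin n, ‖fderiv ℂ φ z u k‖ ^ 2 / (1 - ‖φ z k‖ ^ 2) ^ 2 ≤ polyH n z u := by
    intro k
    have hb : ∀ w ∈ polydisk n, ‖φ w k‖ < 1 := fun w hw => (hmap hw) k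
    have hd := dir_schwarz_pick (coord_diff hφ k) hb hz u
    rw [fderiv_coord_apply hφz k u] at hd
    have h1 := one_sub_sq_pos (hmap hz) k
    rw [div_le_iff₀ (by positivity)]
    calc ‖fderiv ℂ φ z u k‖ ^ 2 ≤ ((1 - ‖φ z k‖ ^ 2) * Real.sqrt (polyH n z u)) ^ 2 := by
          have hnn : (0:ℝ) ≤ ‖fderiv ℂ φ z u k‖ := norm_nonneg _
          nlinarith [hd]
    _ = polyH n z u * (1 - ‖φ z k‖ ^ 2) ^ 2 := by
          rw [mul_pow, Real.sq_sqrt (polyH_nonneg z u)]; ring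
  calc polyH n (φ z) (fderiv ℂ φ z u) =
      ∑ k, ‖fderiv ℂ φ z u k‖ ^ 2 / (1 - ‖φ z k‖ ^ 2) ^ 2 := rfl
  _ ≤ ∑ _k : Fin n, polyH n z u := Finset.sum_le_sum (fun k _ => hkey k)
  _ = (n : ℝ) * polyH n z u := by rw [Finset.sum_const]; simp [mul_comm]

include hmap hφ in
lemma bergman_bddAbove : BddAbove {r : ℝ | ∃ z ∈ polydisk n, ∃ u : Fin n → ℂ, u ≠ 0 ∧
    r = Real.sqrt (polyH n (φ z) (fderiv ℂ φ z u) / polyH n z u)} := by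
  refine ⟨Real.sqrt n, ?_⟩
  rintro r ⟨z, hz, u, hu, rfl⟩
  apply Real.sqrt_le_sqrt
  rw [div_le_iff₀ (polyH_pos hz hu)]
  exact polyH_fderiv_le hmap hφ z hz u

include hmap hφ in
lemma bergman_pointwise (hB : bergmanConstPoly n φ ≤ 1) {z : Fin n → ℂ}
    (hz : z ∈ polydisk n) (u : Fin n → ℂ) :
    polyH n (φ z) (fderiv ℂ φ z u) ≤ polyH n z u := by
  rcases eq_or_ne u 0 with rfl | hu
  · have : fderiv ℂ φ z 0 = 0 := map_zero _
    rw [this]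
    simp [polyH]
  have hmem : Real.sqrt (polyH n (φ z) (fderiv ℂ φ z u) / polyH n z u) ∈
      {r : ℝ | ∃ z ∈ polydisk n, ∃ u : Fin n → ℂ, u ≠ 0 ∧
        r = Real.sqrt (polyH n (φ z) (fderiv ℂ φ z u) / polyH n z u)} :=
    ⟨z, hz, u, hu, rfl⟩
  have hle : Real.sqrt (polyH n (φ z) (fderiv ℂ φ z u) / polyH n z u) ≤ 1 :=
    le_trans (le_csSup (bergman_bddAbove hmap hφ) hmem) hB
  have hdiv : polyH n (φ z) (fderiv ℂ φ z u) / polyH n z u ≤ 1 := by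
    have := Real.sqrt_le_sqrt (le_of_eq (rfl : polyH n (φ z) (fderiv ℂ φ z u) / polyH n z u = _))
    nlinarith [Real.sq_sqrt (div_nonneg (polyH_nonneg (φ z) (fderiv ℂ φ z u)) (polyH_nonneg z u)),
      Real.sqrt_nonneg (polyH n (φ z) (fderiv ℂ φ z u) / polyH n z u)]
  rw [div_le_one (polyH_pos hz hu)] at hdiv
  exact hdiv

include hmap hφ in
lemma Qcomp_le {f : (Fin n → ℂ) → ℂ} (hB : bergmanConstPoly n φ ≤ 1)
    (hf : DifferentiableOn ℂ f (polydisk n)) (hbb : BddAbove (blochValuesPoly n f))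
    {z : Fin n → ℂ} (hz : z ∈ polydisk n) :
    Qpoly n (f ∘ φ) z ≤ blochSemiPoly n f := by
  refine Qpoly_le (blochSemi_nonneg f) ?_
  intro u hu
  have hφz : DifferentiableAt ℂ φ z :=
    (hφ z hz).differentiableAt ((isOpen_polydisk n).mem_nhds hz)
  have hfz : DifferentiableAt ℂ f (φ z) :=
    (hf _ (hmap hz)).differentiableAt ((isOpen_polydisk n).mem_nhds (hmap hz))
  have hcomp : fderiv ℂ (f ∘ φ) z = (fderiv ℂ f (φ z)).comp (fderiv ℂ φ z) :=
    fderiv_comp z hfz hφz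
  rw [div_le_iff₀ (sqrt_polyH_pos hz hu), hcomp]
  calc ‖(fderiv ℂ f (φ z)).comp (fderiv ℂ φ z) u‖
      = ‖fderiv ℂ f (φ z) (fderiv ℂ φ z u)‖ := rfl
  _ ≤ Qpoly n f (φ z) * Real.sqrt (polyH n (φ z) (fderiv ℂ φ z u)) :=
      norm_fderiv_le_Qpoly (hmap hz) _
  _ ≤ Qpoly n f (φ z) * Real.sqrt (polyH n z u) := by
      apply mul_le_mul_of_nonneg_left _ (Qpoly_nonneg f (φ z))
      exact Real.sqrt_le_sqrt (bergman_pointwise hmap hφ hB hz u)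
  _ ≤ blochSemiPoly n f * Real.sqrt (polyH n z u) := by
      apply mul_le_mul_of_nonneg_right _ (Real.sqrt_nonneg _)
      exact Qpoly_le_blochSemi hbb (hmap hz)

end easy




lemma clm_apply_eq_sum (A : (Fin n → ℂ) →L[ℂ] (Fin n → ℂ)) (v : Fin n → ℂ) (k : Fin n) :
    A v k = ∑ l, v l * A ((Pi.single l 1 : Fin n → ℂ)) k := by
  have hv : v = ∑ l, v l • (Pi.single l 1 : Fin n → ℂ) := by
    funext m
    rw [Finset.sum_apply]
    simp [Pi.single_apply]
  conv_lhs => rw [hv]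
  rw [map_sum, Finset.sum_apply]
  congr 1
  funext l
  rw [map_smul]
  simp

/-- An invertible linear map which is a contraction in both directions for the sup norm
is an isometry for the ℓ² norm. -/
lemma linf_isometry_l2 {A B : (Fin n → ℂ) →L[ℂ] (Fin n → ℂ)}
    (hA : ∀ v, ‖A v‖ ≤ ‖v‖) (hB : ∀ v, ‖B v‖ ≤ ‖v‖)
    (hAB : ∀ v, A (B v) = v) (hBA : ∀ v, B (A v) = v) (v : Fin n → ℂ) :
    ∑ k, ‖A v k‖ ^ 2 = ∑ k, ‖v k‖ ^ 2 := by
  set a : Fin n → Fin n → ℂ := fun k l => A (Pi.single l 1) k with ha_def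
  set b : Fin n → Fin n → ℂ := fun l m => B (Pi.single m 1) l with hb_def
  -- row sums
  have rowsum : ∀ (C : (Fin n → ℂ) →L[ℂ] (Fin n → ℂ)), (∀ v, ‖C v‖ ≤ ‖v‖) →
      ∀ k, ∑ l, ‖C (Pi.single l 1) k‖ ≤ 1 := by
    intro C hC k
    set w : Fin n → ℂ := fun l => if h : C (Pi.single l 1) k = 0 then 1
      else (starRingEnd ℂ) (C (Pi.single l 1) k) / (‖C (Pi.single l 1) k‖ : ℂ) with hw_def
    have hwnorm : ∀ l, ‖w l‖ = 1 := by
      intro l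
      rw [hw_def]
      by_cases h : C (Pi.single l 1) k = 0
      · simp [h]
      · simp only [h, dif_neg, not_false_iff]
        rw [norm_div, RCLike.norm_conj, Complex.norm_real, Real.norm_eq_abs,
          abs_of_pos (norm_pos_iff.2 h), div_self (norm_pos_iff.2 h).ne']
    have hprod : ∀ l, w l * C (Pi.single l 1) k = ((‖C (Pi.single l 1) k‖ : ℝ) : ℂ) := by
      intro l
      rw [hw_def]
      by_cases h : C (Pi.single l 1) k = 0
      · simp [h]
      · simp only [h, dif_neg, not_false_iff]
        rw [div_mul_eq_mul_div, mul_comm, Complex.mul_conj]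
        rw [show normSq (C (Pi.single l 1) k) = ‖C (Pi.single l 1) k‖ ^ 2 from by
          exact Complex.normSq_eq_norm_sq _]
        push_cast
        rw [pow_two, mul_div_assoc, div_self
          (by exact_mod_cast (norm_pos_iff.2 h).ne' :
            ((‖C (Pi.single l 1 : Fin n → ℂ) k‖ : ℝ) : ℂ) ≠ 0), mul_one]
    have hCw : C w k = ((∑ l, ‖C (Pi.single l 1) k‖ : ℝ) : ℂ) := by
      rw [clm_apply_eq_sum]
      push_cast
      congr 1
      funext l
      exact hprod l
    have h1 : ‖C w k‖ ≤ 1 := by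
      calc ‖C w k‖ ≤ ‖C w‖ := norm_le_pi_norm _ k
      _ ≤ ‖w‖ := hC w
      _ ≤ 1 := by
          rw [pi_norm_le_iff_of_nonneg zero_le_one]
          intro l; rw [hwnorm l]
    rw [hCw, Complex.norm_real, Real.norm_eq_abs,
      _root_.abs_of_nonneg (Finset.sum_nonneg fun l _ => norm_nonneg _)] at h1
    exact h1
  have rowA : ∀ k, ∑ l, ‖a k l‖ ≤ 1 := rowsum A hA
  have rowB : ∀ l, ∑ m, ‖b l m‖ ≤ 1 := rowsum B hB
  have entryB : ∀ l m, ‖b l m‖ ≤ 1 := by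
    intro l m
    calc ‖b l m‖ ≤ ∑ m', ‖b l m'‖ :=
      Finset.single_le_sum (fun _ _ => norm_nonneg _) (Finset.mem_univ m)
    _ ≤ 1 := rowB l
  -- A (B (single k 1)) = single k 1
  have unit : ∀ k : Fin n, ∑ l, b l k * a k l = 1 := by
    intro k
    have h := hAB (Pi.single k 1)
    have h2 : A (B (Pi.single k 1)) k = ∑ l, b l k * a k l := clm_apply_eq_sum A _ k
    rw [h] at h2
    rw [← h2]
    simp
  have dichotomy : ∀ k l, a k l = 0 ∨ ‖b l k‖ = 1 := by
    intro k l
    by_contra hcon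
    push_neg at hcon
    obtain ⟨ha0, hb1⟩ := hcon
    have hblt : ‖b l k‖ < 1 := lt_of_le_of_ne (entryB l k) hb1
    have h1 : (1:ℝ) ≤ ∑ l', ‖a k l'‖ * ‖b l' k‖ := by
      calc (1:ℝ) = ‖∑ l', b l' k * a k l'‖ := by rw [unit k]; simp
      _ ≤ ∑ l', ‖b l' k * a k l'‖ := norm_sum_le _ _
      _ = ∑ l', ‖a k l'‖ * ‖b l' k‖ := by
          congr 1; funext l'; rw [norm_mul, mul_comm]
    have h2 : ∑ l', ‖a k l'‖ * ‖b l' k‖ < ∑ l', ‖a k l'‖ := by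
      apply Finset.sum_lt_sum
      · intro i _
        calc ‖a k i‖ * ‖b i k‖ ≤ ‖a k i‖ * 1 :=
          mul_le_mul_of_nonneg_left (entryB i k) (norm_nonneg _)
        _ = ‖a k i‖ := mul_one _
      · refine ⟨l, Finset.mem_univ l, ?_⟩
        have : 0 < ‖a k l‖ := norm_pos_iff.2 ha0
        nlinarith
    linarith [rowA k]
  have support : ∀ l k, ‖b l k‖ = 1 → ∀ m, m ≠ k → b l m = 0 := by
    intro l k hk m hm
    by_contra h0
    have h1 : ∑ m' ∈ ({k, m} : Finset (Fin n)), ‖b l m'‖ ≤ ∑ m', ‖b l m'‖ :=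
      Finset.sum_le_sum_of_subset_of_nonneg (Finset.subset_univ _)
        (fun i _ _ => norm_nonneg _)
    rw [Finset.sum_pair (Ne.symm hm)] at h1
    have : 0 < ‖b l m‖ := norm_pos_iff.2 h0
    have := rowB l
    linarith
  have colA : ∀ l, ∃ k, a k l ≠ 0 := by
    intro l
    by_contra h0
    push_neg at h0
    have hz : A (Pi.single l 1) = 0 := by
      funext k; exact h0 k
    have := hBA (Pi.single l 1)
    rw [hz, map_zero] at this
    have hcontr := congrFun this l
    simp at hcontr
  -- the permutation
  have hexists : ∀ l, ∃ k, ‖b l k‖ = 1 := by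
    intro l
    obtain ⟨k, hk⟩ := colA l
    rcases dichotomy k l with h | h
    · exact absurd h hk
    · exact ⟨k, h⟩
  choose π hπ using hexists
  have hBapply : ∀ (w : Fin n → ℂ) l, B w l = w (π l) * b l (π l) := by
    intro w l
    rw [clm_apply_eq_sum]
    rw [Finset.sum_eq_single (π l)]
    · intro m _ hm
      rw [show B ((Pi.single m 1 : Fin n → ℂ)) l = b l m from rfl,
        support l (π l) (hπ l) m hm, mul_zero]
    · intro h; exact absurd (Finset.mem_univ _) h
  have hπinj : Function.Injective π := by
    intro l l' hll
    by_contra hne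
    obtain ⟨vv, hvv⟩ : ∃ vv, B vv = Pi.single l 1 := ⟨A (Pi.single l 1), hBA _⟩
    have h1 : B vv l = 1 := by rw [hvv]; simp
    have h2 : B vv l' = 0 := by rw [hvv]; exact Pi.single_eq_of_ne (Ne.symm hne) _
    rw [hBapply] at h1 h2
    have hb2 : b l' (π l') ≠ 0 := by
      intro h
      have hh := hπ l'
      rw [h] at hh
      simp at hh
    have hv0 : vv (π l') = 0 := by
      rcases mul_eq_zero.1 h2 with h | h
      · exact h
      · exact absurd h hb2
    rw [hll, hv0, zero_mul] at h1
    exact one_ne_zero h1.symm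
  have hπbij : Function.Bijective π := Finite.injective_iff_bijective.1 hπinj
  have hBiso : ∀ w : Fin n → ℂ, ∑ l, ‖B w l‖ ^ 2 = ∑ k, ‖w k‖ ^ 2 := by
    intro w
    have h1 : ∀ l, ‖B w l‖ ^ 2 = ‖w (π l)‖ ^ 2 := by
      intro l
      rw [hBapply, norm_mul, hπ l, mul_one]
    calc ∑ l, ‖B w l‖ ^ 2 = ∑ l, ‖w (π l)‖ ^ 2 := by
          congr 1; funext l; exact h1 l
    _ = ∑ k, ‖w k‖ ^ 2 := (Equiv.ofBijective π hπbij).sum_comp (fun k => ‖w k‖ ^ 2)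
  have := hBiso (A v)
  rw [show B (A v) = v from hBA v] at this
  linarith [this]





/-! ### Product Möbius transformations -/

noncomputable def mobD (a z : ℂ) : ℂ :=
  ((starRingEnd ℂ) a * a - 1) / (1 - (starRingEnd ℂ) a * z) ^ 2

noncomputable def Mov (a : Fin n → ℂ) : (Fin n → ℂ) → (Fin n → ℂ) :=
  fun z k => mob (a k) (z k)

noncomputable def MovD (a z : Fin n → ℂ) : (Fin n → ℂ) →L[ℂ] (Fin n → ℂ) :=
  ContinuousLinearMap.pi (fun k => mobD (a k) (z k) • ContinuousLinearMap.proj k)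

lemma MovD_apply (a z u : Fin n → ℂ) (k : Fin n) :
    MovD a z u k = mobD (a k) (z k) * u k := rfl

lemma Mov_maps {a : Fin n → ℂ} (ha : a ∈ polydisk n) {z : Fin n → ℂ}
    (hz : z ∈ polydisk n) : Mov a z ∈ polydisk n :=
  fun k => mob_maps (ha k) (hz k)

lemma Mov_self (a : Fin n → ℂ) : Mov a a = 0 := by
  funext k; exact mob_self (a k)

lemma Mov_zero (a : Fin n → ℂ) : Mov a 0 = a := by
  funext k; exact mob_zero (a k)

lemma Mov_invol {a : Fin n → ℂ} (ha : a ∈ polydisk n) {z : Fin n → ℂ}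
    (hz : z ∈ polydisk n) : Mov a (Mov a z) = z := by
  funext k; exact mob_invol (ha k) (hz k)

lemma hasFDerivAt_Mov {a : Fin n → ℂ} (ha : a ∈ polydisk n) {z : Fin n → ℂ}
    (hz : z ∈ polydisk n) : HasFDerivAt (Mov a) (MovD a z) z := by
  apply hasFDerivAt_pi''
  intro k
  rw [show (ContinuousLinearMap.proj k).comp (MovD a z)
      = mobD (a k) (z k) • ContinuousLinearMap.proj k from ContinuousLinearMap.proj_pi _ k]
  have hm : HasDerivAt (mob (a k)) (mobD (a k) (z k)) ((fun w : Fin n → ℂ => w k) z) :=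
    hasDerivAt_mob (mob_denom_ne_zero (ha k) (hz k))
  exact hm.comp_hasFDerivAt z (hasFDerivAt_apply k z)

lemma Mov_diff {a : Fin n → ℂ} (ha : a ∈ polydisk n) :
    DifferentiableOn ℂ (Mov a) (polydisk n) := fun z hz =>
  (hasFDerivAt_Mov ha hz).differentiableAt.differentiableWithinAt

lemma mobD_norm_pos {a z : ℂ} (ha : ‖a‖ < 1) (hz : ‖z‖ < 1) : 0 < ‖mobD a z‖ := by
  have h := norm_mob_deriv ha hz
  have h1 : 0 < 1 - ‖z‖ ^ 2 := by nlinarith [norm_nonneg z]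
  have h2 : 0 < 1 - ‖mob a z‖ ^ 2 := by nlinarith [mob_maps ha hz, norm_nonneg (mob a z)]
  rw [← mobD] at h
  by_contra hle
  push_neg at hle
  have : ‖mobD a z‖ = 0 := le_antisymm hle (norm_nonneg _)
  rw [this, zero_mul] at h
  linarith

lemma Mov_isometry {a : Fin n → ℂ} (ha : a ∈ polydisk n) {z : Fin n → ℂ}
    (hz : z ∈ polydisk n) (u : Fin n → ℂ) :
    polyH n (Mov a z) (MovD a z u) = polyH n z u := by
  unfold polyH
  congr 1
  funext k
  have h := norm_mob_deriv (ha k) (hz k)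
  rw [← mobD] at h
  have h1 := one_sub_sq_pos hz k
  have h2 : 0 < 1 - ‖Mov a z k‖ ^ 2 := one_sub_sq_pos (Mov_maps ha hz) k
  have hD : 0 < ‖mobD (a k) (z k)‖ := mobD_norm_pos (ha k) (hz k)
  rw [MovD_apply, norm_mul]
  have hMv : ‖Mov a z k‖ = ‖mob (a k) (z k)‖ := rfl
  rw [hMv]
  rw [← h, mul_pow, mul_pow]
  exact mul_div_mul_left _ _ (pow_ne_zero 2 hD.ne')

lemma polyH_zero_eq (u : Fin n → ℂ) : polyH n 0 u = ∑ k, ‖u k‖ ^ 2 := by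
  unfold polyH
  congr 1
  funext k
  simp

/-! ### Automorphisms are Bergman isometries -/

theorem aut_isometry {S : (Fin n → ℂ) → Fin n → ℂ} (hS : IsPolydiskAut n S)
    {a : Fin n → ℂ} (ha : a ∈ polydisk n) (u : Fin n → ℂ) :
    polyH n (S a) (fderiv ℂ S a u) = polyH n a u := by
  obtain ⟨hSd, hSbij, T, hTd, hTS, hST⟩ := hS
  have hopen := isOpen_polydisk n
  have haS : S a ∈ polydisk n := hSbij.mapsTo ha
  have hTmaps : MapsTo T (polydisk n) (polydisk n) := by
    intro w hw
    obtain ⟨v, hv, rfl⟩ := hSbij.surjOn hw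
    rw [hTS hv]
    exact hv
  set SA := S a with hSA_def
  have hR0 : Mov SA (S (Mov a 0)) = 0 := by rw [Mov_zero, ← hSA_def, Mov_self]
  have hRmaps : ∀ w ∈ polydisk n, Mov SA (S (Mov a w)) ∈ polydisk n := fun w hw =>
    Mov_maps haS (hSbij.mapsTo (Mov_maps ha hw))
  have hR'maps : ∀ w ∈ polydisk n, Mov a (T (Mov SA w)) ∈ polydisk n := fun w hw =>
    Mov_maps ha (hTmaps (Mov_maps haS hw))
  have hR'R : ∀ w ∈ polydisk n, Mov a (T (Mov SA (Mov SA (S (Mov a w))))) = w := by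
    intro w hw
    have h1 : Mov a w ∈ polydisk n := Mov_maps ha hw
    have h2 : S (Mov a w) ∈ polydisk n := hSbij.mapsTo h1
    rw [Mov_invol haS h2, hTS h1, Mov_invol ha hw]
  have hRR' : ∀ w ∈ polydisk n, Mov SA (S (Mov a (Mov a (T (Mov SA w))))) = w := by
    intro w hw
    have h1 : Mov SA w ∈ polydisk n := Mov_maps haS hw
    have h2 : T (Mov SA w) ∈ polydisk n := hTmaps h1
    rw [Mov_invol ha h2, hST h1, Mov_invol haS hw]
  -- derivatives
  have hSder : HasFDerivAt S (fderiv ℂ S a) a :=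
    ((hSd a ha).differentiableAt (hopen.mem_nhds ha)).hasFDerivAt
  have hTder : HasFDerivAt T (fderiv ℂ T SA) SA :=
    ((hTd _ haS).differentiableAt (hopen.mem_nhds haS)).hasFDerivAt
  set A : (Fin n → ℂ) →L[ℂ] (Fin n → ℂ) :=
    (MovD SA SA).comp ((fderiv ℂ S a).comp (MovD a 0)) with hA_def
  set B : (Fin n → ℂ) →L[ℂ] (Fin n → ℂ) :=
    (MovD a a).comp ((fderiv ℂ T SA).comp (MovD SA 0)) with hB_def
  have h1 : HasFDerivAt (Mov a) (MovD a 0) 0 := hasFDerivAt_Mov ha zero_mem_polydisk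
  have h2 : HasFDerivAt S (fderiv ℂ S a) (Mov a 0) := by rw [Mov_zero]; exact hSder
  have hinner : HasFDerivAt (S ∘ Mov a) ((fderiv ℂ S a).comp (MovD a 0)) 0 := h2.comp 0 h1
  have h3 : HasFDerivAt (Mov SA) (MovD SA SA) ((S ∘ Mov a) 0) := by
    show HasFDerivAt (Mov SA) (MovD SA SA) (S (Mov a 0))
    rw [Mov_zero]; exact hasFDerivAt_Mov haS haS
  have hRder : HasFDerivAt (fun w => Mov SA (S (Mov a w))) A 0 := h3.comp 0 hinner
  have h4 : HasFDerivAt (Mov SA) (MovD SA 0) 0 := hasFDerivAt_Mov haS zero_mem_polydisk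
  have h5 : HasFDerivAt T (fderiv ℂ T SA) (Mov SA 0) := by rw [Mov_zero]; exact hTder
  have hinner' : HasFDerivAt (T ∘ Mov SA) ((fderiv ℂ T SA).comp (MovD SA 0)) 0 := h5.comp 0 h4
  have h6 : HasFDerivAt (Mov a) (MovD a a) ((T ∘ Mov SA) 0) := by
    show HasFDerivAt (Mov a) (MovD a a) (T (Mov SA 0))
    rw [Mov_zero, hTS ha]
    exact hasFDerivAt_Mov ha ha
  have hR'der : HasFDerivAt (fun w => Mov a (T (Mov SA w))) B 0 := h6.comp 0 hinner'
  -- compositions are the identity near 0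
  have hnhds : polydisk n ∈ nhds (0 : Fin n → ℂ) := hopen.mem_nhds zero_mem_polydisk
  have hBA_id : ∀ v, B (A v) = v := by
    have hc : HasFDerivAt (fun w => Mov a (T (Mov SA (Mov SA (S (Mov a w)))))) (B.comp A) 0 := by
      have hB0 : HasFDerivAt (fun w => Mov a (T (Mov SA w))) B
          ((fun w => Mov SA (S (Mov a w))) 0) := by
        show HasFDerivAt _ B (Mov SA (S (Mov a 0)))
        rw [Mov_zero, Mov_self]
        exact hR'der
      exact hB0.comp 0 hRder
    have hid : HasFDerivAt (fun w : Fin n → ℂ => w)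
        (ContinuousLinearMap.id ℂ (Fin n → ℂ)) 0 := hasFDerivAt_id 0
    have hEq : (fun w : Fin n → ℂ => w) =ᶠ[nhds 0]
        (fun w => Mov a (T (Mov SA (Mov SA (S (Mov a w)))))) := by
      filter_upwards [hnhds] with w hw
      exact (hR'R w hw).symm
    have := (hc.congr_of_eventuallyEq hEq).unique hid
    intro v
    have hv := congrArg (fun (L : (Fin n → ℂ) →L[ℂ] (Fin n → ℂ)) => L v) this
    simpa using hv
  have hAB_id : ∀ v, A (B v) = v := by
    have hc : HasFDerivAt (fun w => Mov SA (S (Mov a (Mov a (T (Mov SA w)))))) (A.comp B) 0 := by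
      have hA0 : HasFDerivAt (fun w => Mov SA (S (Mov a w))) A
          ((fun w => Mov a (T (Mov SA w))) 0) := by
        show HasFDerivAt _ A (Mov a (T (Mov SA 0)))
        rw [Mov_zero, hTS ha, Mov_self]
        exact hRder
      exact hA0.comp 0 hR'der
    have hid : HasFDerivAt (fun w : Fin n → ℂ => w)
        (ContinuousLinearMap.id ℂ (Fin n → ℂ)) 0 := hasFDerivAt_id 0
    have hEq : (fun w : Fin n → ℂ => w) =ᶠ[nhds 0]
        (fun w => Mov SA (S (Mov a (Mov a (T (Mov SA w)))))) := by
      filter_upwards [hnhds] with w hw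
      exact (hRR' w hw).symm
    have := (hc.congr_of_eventuallyEq hEq).unique hid
    intro v
    have hv := congrArg (fun (L : (Fin n → ℂ) →L[ℂ] (Fin n → ℂ)) => L v) this
    simpa using hv
  -- contraction property
  have hcontr : ∀ (Φ : (Fin n → ℂ) → Fin n → ℂ) (L : (Fin n → ℂ) →L[ℂ] (Fin n → ℂ)),
      (∀ w ∈ polydisk n, Φ w ∈ polydisk n) → Φ 0 = 0 →
      DifferentiableOn ℂ Φ (polydisk n) → HasFDerivAt Φ L 0 → ∀ v, ‖L v‖ ≤ ‖v‖ := by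
    intro Φ L hmaps h0 hdiff hder v
    rw [pi_norm_le_iff_of_nonneg (norm_nonneg v)]
    intro k
    have hcoord : DifferentiableOn ℂ (fun w => Φ w k) (polydisk n) :=
      differentiableOn_pi.1 hdiff k
    have hbk : ∀ w ∈ polydisk n, ‖Φ w k‖ < 1 := fun w hw => hmaps w hw k
    have h0k : (fun w => Φ w k) 0 = 0 := by show Φ 0 k = 0; rw [h0]; rfl
    have := linf_schwarz hcoord hbk h0k v
    rwa [fderiv_coord_apply hder.differentiableAt k v, hder.fderiv] at this
  have hRdiff : DifferentiableOn ℂ (fun w => Mov SA (S (Mov a w))) (polydisk n) := by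
    intro w hw
    have hh1 : DifferentiableAt ℂ (Mov a) w := (hasFDerivAt_Mov ha hw).differentiableAt
    have hh2 : DifferentiableAt ℂ S (Mov a w) :=
      (hSd _ (Mov_maps ha hw)).differentiableAt (hopen.mem_nhds (Mov_maps ha hw))
    have hh3 : DifferentiableAt ℂ (Mov SA) (S (Mov a w)) :=
      (hasFDerivAt_Mov haS (hSbij.mapsTo (Mov_maps ha hw))).differentiableAt
    exact ((hh3.comp _ hh2).comp w hh1).differentiableWithinAt
  have hR'diff : DifferentiableOn ℂ (fun w => Mov a (T (Mov SA w))) (polydisk n) := by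
    intro w hw
    have hh1 : DifferentiableAt ℂ (Mov SA) w := (hasFDerivAt_Mov haS hw).differentiableAt
    have hh2 : DifferentiableAt ℂ T (Mov SA w) :=
      (hTd _ (Mov_maps haS hw)).differentiableAt (hopen.mem_nhds (Mov_maps haS hw))
    have hh3 : DifferentiableAt ℂ (Mov a) (T (Mov SA w)) :=
      (hasFDerivAt_Mov ha (hTmaps (Mov_maps haS hw))).differentiableAt
    exact ((hh3.comp _ hh2).comp w hh1).differentiableWithinAt
  have hAle : ∀ v, ‖A v‖ ≤ ‖v‖ :=
    hcontr _ A hRmaps hR0 hRdiff hRder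
  have hR'0 : Mov a (T (Mov SA 0)) = 0 := by rw [Mov_zero, hTS ha, Mov_self]
  have hBle : ∀ v, ‖B v‖ ≤ ‖v‖ :=
    hcontr _ B hR'maps hR'0 hR'diff hR'der
  have hiso := linf_isometry_l2 hAle hBle hAB_id hBA_id
  -- now express S near a as Mov SA ∘ R ∘ Mov a
  have hSeq : S =ᶠ[nhds a] (fun w => Mov SA (Mov SA (S (Mov a (Mov a w))))) := by
    filter_upwards [hopen.mem_nhds ha] with w hw
    rw [Mov_invol ha hw, Mov_invol haS (hSbij.mapsTo hw)]
  have hcomp2 : HasFDerivAt (fun w => Mov SA (Mov SA (S (Mov a (Mov a w)))))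
      ((MovD SA 0).comp (A.comp (MovD a a))) a := by
    have g1 : HasFDerivAt (Mov a) (MovD a a) a := hasFDerivAt_Mov ha ha
    have g2 : HasFDerivAt (fun w => Mov SA (S (Mov a w))) A ((Mov a) a) := by
      rw [Mov_self]; exact hRder
    have g3 : HasFDerivAt (Mov SA) (MovD SA 0)
        ((fun w => Mov SA (S (Mov a w))) (Mov a a)) := by
      show HasFDerivAt (Mov SA) (MovD SA 0) (Mov SA (S (Mov a (Mov a a))))
      rw [Mov_self, Mov_zero, Mov_self]
      exact hasFDerivAt_Mov haS zero_mem_polydisk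
    exact g3.comp a (g2.comp a g1)
  have hSder2 : HasFDerivAt S ((MovD SA 0).comp (A.comp (MovD a a))) a :=
    hcomp2.congr_of_eventuallyEq hSeq
  have hfderiv_eq : fderiv ℂ S a = (MovD SA 0).comp (A.comp (MovD a a)) := by
    exact hSder.unique hSder2
  rw [hfderiv_eq]
  have step1 : polyH n (S a) ((MovD SA 0) (A (MovD a a u))) = polyH n 0 (A (MovD a a u)) := by
    have := Mov_isometry haS (zero_mem_polydisk (n := n)) (A (MovD a a u))
    rw [Mov_zero] at this
    rw [← hSA_def]
    exact this
  have step2 : polyH n 0 (A (MovD a a u)) = polyH n 0 (MovD a a u) := by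
    rw [polyH_zero_eq, polyH_zero_eq]
    exact hiso (MovD a a u)
  have step3 : polyH n 0 (MovD a a u) = polyH n a u := by
    have := Mov_isometry ha ha u
    rw [Mov_self] at this
    exact this
  calc polyH n (S a) (((MovD SA 0).comp (A.comp (MovD a a))) u)
      = polyH n (S a) ((MovD SA 0) (A (MovD a a u))) := rfl
  _ = polyH n a u := by rw [step1, step2, step3]





section conv
variable {φ : (Fin n → ℂ) → Fin n → ℂ} {S : ℕ → (Fin n → ℂ) → Fin n → ℂ}
  {f : (Fin n → ℂ) → ℂ}

/-- locally uniform convergence of derivatives along a complex line -/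
lemma fderiv_tendsto
    (hmap : MapsTo φ (polydisk n) (polydisk n))
    (hφ : DifferentiableOn ℂ φ (polydisk n))
    (hS : ∀ j, IsPolydiskAut n (S j))
    (hconv : ∀ K ⊆ polydisk n, IsCompact K →
      TendstoUniformlyOn (fun j => φ ∘ S j) id Filter.atTop K)
    (hf : DifferentiableOn ℂ f (polydisk n))
    {z : Fin n → ℂ} (hz : z ∈ polydisk n) (u : Fin n → ℂ) :
    Filter.Tendsto (fun j => fderiv ℂ ((f ∘ φ) ∘ S j) z u) Filter.atTop
      (nhds (fderiv ℂ f z u)) := by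
  classical
  have hopen := isOpen_polydisk n
  set ℓ : ℂ → (Fin n → ℂ) := fun lam => z + lam • u with hℓ_def
  have hℓ0 : ℓ 0 = z := by simp [hℓ_def]
  have hℓder : ∀ lam : ℂ, HasDerivAt ℓ u lam := by
    intro lam
    rw [hℓ_def]
    have : HasDerivAt (fun lam : ℂ => lam • u) u lam := by
      rw [hasDerivAt_pi]
      intro k
      simpa using (hasDerivAt_id lam).mul_const (u k)
    simpa using this.const_add z
  have hℓcont : Continuous ℓ := by
    rw [hℓ_def]; continuity
  -- choose a radius
  obtain ⟨ε, hεpos, hεsub⟩ : ∃ ε > 0, ball (0:ℂ) ε ⊆ ℓ ⁻¹' polydisk n := by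
    have : IsOpen (ℓ ⁻¹' polydisk n) := hopen.preimage hℓcont
    rw [Metric.isOpen_iff] at this
    exact this 0 (by rw [mem_preimage, hℓ0]; exact hz)
  set r : ℝ := ε / 2 with hr_def
  have hrpos : 0 < r := by positivity
  have hrsub : ∀ lam ∈ closedBall (0:ℂ) r, ℓ lam ∈ polydisk n := by
    intro lam hlam
    apply hεsub
    rw [mem_closedBall] at hlam
    rw [mem_ball]
    calc dist lam 0 ≤ r := hlam
    _ < ε := by rw [hr_def]; linarith
  set K : Set (Fin n → ℂ) := ℓ '' closedBall 0 r with hK_def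
  have hKcompact : IsCompact K := (isCompact_closedBall 0 r).image hℓcont
  have hKsub : K ⊆ polydisk n := by
    rintro _ ⟨lam, hlam, rfl⟩
    exact hrsub lam hlam
  obtain ⟨δ, hδpos, hδsub⟩ := hKcompact.exists_thickening_subset_open hopen hKsub
  set K₂ : Set (Fin n → ℂ) := cthickening (δ/2) K with hK₂_def
  have hK₂compact : IsCompact K₂ := hKcompact.cthickening
  have hK₂sub : K₂ ⊆ polydisk n :=
    (cthickening_subset_thickening' hδpos (by linarith) K).trans hδsub
  have hKK₂ : K ⊆ K₂ := self_subset_cthickening K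
  have hfu : UniformContinuousOn f K₂ :=
    hK₂compact.uniformContinuousOn_of_continuous ((hf.mono hK₂sub).continuousOn)
  -- uniform convergence of f ∘ φ ∘ S j on K
  have hFu : TendstoUniformlyOn (fun j x => f ((φ ∘ S j) x)) f Filter.atTop K := by
    rw [Metric.tendstoUniformlyOn_iff]
    intro eps hepspos
    rw [Metric.uniformContinuousOn_iff] at hfu
    obtain ⟨δ', hδ'pos, hδ'⟩ := hfu eps hepspos
    have hcv := hconv K hKsub hKcompact
    rw [Metric.tendstoUniformlyOn_iff] at hcv
    filter_upwards [hcv (min δ' (δ/2)) (lt_min hδ'pos (by linarith))] with j hj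
    intro x hx
    have hdist := hj x hx
    simp only [id_eq] at hdist
    have hyK₂ : (φ ∘ S j) x ∈ K₂ := by
      apply mem_cthickening_of_dist_le ((φ ∘ S j) x) x (δ/2) K hx
      rw [dist_comm]
      exact le_of_lt (lt_of_lt_of_le hdist (min_le_right _ _))
    apply hδ' x (hKK₂ hx) ((φ ∘ S j) x) hyK₂
    exact lt_of_lt_of_le hdist (min_le_left _ _)
  -- transfer along ℓ
  set F : ℕ → ℂ → ℂ := fun j lam => ((f ∘ φ) ∘ S j) (ℓ lam) with hF_def
  set G : ℂ → ℂ := fun lam => f (ℓ lam) with hG_def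
  have hFu' : TendstoUniformlyOn F G Filter.atTop (closedBall 0 r) := by
    rw [Metric.tendstoUniformlyOn_iff]
    intro eps hepspos
    rw [Metric.tendstoUniformlyOn_iff] at hFu
    filter_upwards [hFu eps hepspos] with j hj
    intro lam hlam
    exact hj (ℓ lam) ⟨lam, hlam, rfl⟩
  have hloc : TendstoLocallyUniformlyOn F G Filter.atTop (ball 0 r) :=
    (hFu'.tendstoLocallyUniformlyOn).mono ball_subset_closedBall
  have hdiffℓ : ∀ lam : ℂ, DifferentiableAt ℂ ℓ lam := fun lam =>
    (hℓder lam).differentiableAt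
  have hchain : ∀ j (w : Fin n → ℂ), w ∈ polydisk n →
      DifferentiableAt ℂ ((f ∘ φ) ∘ S j) w := by
    intro j w hw
    obtain ⟨hSd, hSbij, _⟩ := hS j
    have h1 : DifferentiableAt ℂ (S j) w := (hSd w hw).differentiableAt (hopen.mem_nhds hw)
    have hw1 : S j w ∈ polydisk n := hSbij.mapsTo hw
    have h2 : DifferentiableAt ℂ φ (S j w) :=
      (hφ _ hw1).differentiableAt (hopen.mem_nhds hw1)
    have hw2 : φ (S j w) ∈ polydisk n := hmap hw1
    have h3 : DifferentiableAt ℂ f (φ (S j w)) :=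
      (hf _ hw2).differentiableAt (hopen.mem_nhds hw2)
    exact (h3.comp _ h2).comp w h1
  have hFdiff : ∀ j, DifferentiableOn ℂ (F j) (ball 0 r) := by
    intro j lam hlam
    have hmem : ℓ lam ∈ polydisk n := hrsub lam (ball_subset_closedBall hlam)
    exact ((hchain j (ℓ lam) hmem).comp lam (hdiffℓ lam)).differentiableWithinAt
  have hder := hloc.deriv (Filter.Eventually.of_forall hFdiff) isOpen_ball
  have htend := hder.tendsto_at (mem_ball_self hrpos)
  -- identify the derivatives
  have hFj_deriv : ∀ j, deriv (F j) 0 = fderiv ℂ ((f ∘ φ) ∘ S j) z u := by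
    intro j
    have h1 : HasFDerivAt ((f ∘ φ) ∘ S j) (fderiv ℂ ((f ∘ φ) ∘ S j) z) (ℓ 0) := by
      rw [hℓ0]
      exact (hchain j z hz).hasFDerivAt
    have h2 : HasDerivAt (F j) (fderiv ℂ ((f ∘ φ) ∘ S j) z u) 0 :=
      h1.comp_hasDerivAt 0 (hℓder 0)
    exact h2.deriv
  have hG_deriv : deriv G 0 = fderiv ℂ f z u := by
    have h1 : HasFDerivAt f (fderiv ℂ f z) (ℓ 0) := by
      rw [hℓ0]
      exact (hf z hz).differentiableAt (hopen.mem_nhds hz) |>.hasFDerivAt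
    have h2 : HasDerivAt G (fderiv ℂ f z u) 0 := h1.comp_hasDerivAt 0 (hℓder 0)
    exact h2.deriv
  rw [← hG_deriv]
  have : (fun j => fderiv ℂ ((f ∘ φ) ∘ S j) z u) = fun j => (deriv ∘ F) j 0 := by
    funext j
    rw [Function.comp_apply, hFj_deriv j]
  rw [this]
  exact htend

end conv


end BlochAux

open BlochAux in

/-- If `φ` is a holomorphic self-map of `𝔻ⁿ` with `φ(0) = 0` and `B_φ ≤ 1`, and
`φ ∘ S_j` converges uniformly on compact subsets of `𝔻ⁿ` to the identity for
some sequence of automorphisms `S_j` of `𝔻ⁿ`, then `C_φ` is an isometry on the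
Bloch space of `𝔻ⁿ`. -/
theorem isometry_of_bergmanConst_le_one_and_approx_identity (n : ℕ)
    (φ : (Fin n → ℂ) → Fin n → ℂ)
    (hmap : MapsTo φ (polydisk n) (polydisk n))
    (hφ : DifferentiableOn ℂ φ (polydisk n))
    (h0 : φ 0 = 0)
    (hB : bergmanConstPoly n φ ≤ 1)
    (S : ℕ → (Fin n → ℂ) → Fin n → ℂ)
    (hS : ∀ j, IsPolydiskAut n (S j))
    (hconv : ∀ K ⊆ polydisk n, IsCompact K →
      TendstoUniformlyOn (fun j => φ ∘ S j) id Filter.atTop K) :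
    ∀ f : (Fin n → ℂ) → ℂ, IsBlochPoly n f →
      IsBlochPoly n (f ∘ φ) ∧ blochNormPoly n (f ∘ φ) = blochNormPoly n f 
:= by
  intro f hf
  obtain ⟨hfd, hfb⟩ := hf
  have hopen := isOpen_polydisk n
  have hcompdiff : DifferentiableOn ℂ (f ∘ φ) (polydisk n) := by
    intro w hw
    have h1 : DifferentiableAt ℂ φ w := (hφ w hw).differentiableAt (hopen.mem_nhds hw)
    have h2 : DifferentiableAt ℂ f (φ w) :=
      (hfd _ (hmap hw)).differentiableAt (hopen.mem_nhds (hmap hw))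
    exact (h2.comp w h1).differentiableWithinAt
  have hQle : ∀ z ∈ polydisk n, Qpoly n (f ∘ φ) z ≤ blochSemiPoly n f :=
    fun z hz => Qcomp_le hmap hφ hB hfd hfb hz
  have hbddc : BddAbove (blochValuesPoly n (f ∘ φ)) := by
    refine ⟨blochSemiPoly n f, ?_⟩
    rintro r ⟨z, hz, rfl⟩
    exact hQle z hz
  have hle : blochSemiPoly n (f ∘ φ) ≤ blochSemiPoly n f :=
    blochSemi_le (blochSemi_nonneg f) hQle
  have hge : blochSemiPoly n f ≤ blochSemiPoly n (f ∘ φ) := by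
    refine blochSemi_le (blochSemi_nonneg (f ∘ φ)) ?_
    intro z hz
    refine Qpoly_le (blochSemi_nonneg (f ∘ φ)) ?_
    intro u hu
    rw [div_le_iff₀ (sqrt_polyH_pos hz hu)]
    have hbound : ∀ j, ‖fderiv ℂ ((f ∘ φ) ∘ S j) z u‖ ≤
        blochSemiPoly n (f ∘ φ) * Real.sqrt (polyH n z u) := by
      intro j
      obtain ⟨hSd, hSbij, hTex⟩ := hS j
      have hSdiff : DifferentiableAt ℂ (S j) z :=
        (hSd z hz).differentiableAt (hopen.mem_nhds hz)
      have hwj : S j z ∈ polydisk n := hSbij.mapsTo hz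
      have hgd : DifferentiableAt ℂ (f ∘ φ) (S j z) := by
        have h1 : DifferentiableAt ℂ φ (S j z) :=
          (hφ _ hwj).differentiableAt (hopen.mem_nhds hwj)
        have h2 : DifferentiableAt ℂ f (φ (S j z)) :=
          (hfd _ (hmap hwj)).differentiableAt (hopen.mem_nhds (hmap hwj))
        exact h2.comp _ h1
      have hcomp : fderiv ℂ ((f ∘ φ) ∘ S j) z
          = (fderiv ℂ (f ∘ φ) (S j z)).comp (fderiv ℂ (S j) z) :=
        fderiv_comp z hgd hSdiff
      rw [hcomp]
      calc ‖(fderiv ℂ (f ∘ φ) (S j z)).comp (fderiv ℂ (S j) z) u‖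
          = ‖fderiv ℂ (f ∘ φ) (S j z) (fderiv ℂ (S j) z u)‖ := rfl
      _ ≤ Qpoly n (f ∘ φ) (S j z) * Real.sqrt (polyH n (S j z) (fderiv ℂ (S j) z u)) :=
            norm_fderiv_le_Qpoly hwj _
      _ = Qpoly n (f ∘ φ) (S j z) * Real.sqrt (polyH n z u) := by
            rw [aut_isometry (hS j) hz u]
      _ ≤ blochSemiPoly n (f ∘ φ) * Real.sqrt (polyH n z u) :=
            mul_le_mul_of_nonneg_right (Qpoly_le_blochSemi hbddc hwj) (Real.sqrt_nonneg _)
    have htend := fderiv_tendsto hmap hφ hS hconv hfd hz u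
    have hnorm := htend.norm
    exact le_of_tendsto hnorm (Filter.Eventually.of_forall hbound)
  have hsemi : blochSemiPoly n (f ∘ φ) = blochSemiPoly n f := le_antisymm hle hge
  refine ⟨⟨hcompdiff, hbddc⟩, ?_⟩
  unfold blochNormPoly
  rw [hsemi]
  congr 1
  show ‖f (φ 0)‖ = ‖f 0‖
  rw [h0]
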